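/- For every d ≥ 2, k ≥ 2 and d+1 ≤ s ≤ ⌊k/2⌋ + d, the number of equivalence classes of closed words of length k+1 with |supp₀(w)| = s and N_w(τ) ≠ 1 for every d-cell τ is at most (ds)^k. -/

import Mathlib

def ClosedWord (d k s : ℕ) : Type :=
  {σ : Fin (k + 1) → Finset ℕ //
    (∀ i, (σ i).card = d) ∧
    (∀ i : Fin k, (σ i.castSucc ∪ σ i.succ).card = d + 1) ∧
    σ (Fin.last k) = σ 0 ∧
    (Finset.univ.biUnion σ).card = s ∧
    ∀ τ : Finset ℕ,
      (Finset.univ.filter (fun i : Fin k => σ i.castSucc ∪ σ i.succ = τ)).card ≠ 1}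

def WordEquiv (d k s : ℕ) (w w' : ClosedWord d k s) : Prop :=
  ∃ π : ℕ → ℕ,
    Set.BijOn π ↑(Finset.univ.biUnion w.1) ↑(Finset.univ.biUnion w'.1) ∧
    (∀ i, (w.1 i).image π = w'.1 i) ∧
    StrictMonoOn π ↑(w.1 0)

namespace Stmt2Aux

lemma sdiff_card_one {d : ℕ} {a b : Finset ℕ} (ha : a.card = d) (hb : b.card = d)
    (hu : (a ∪ b).card = d + 1) : (a \ b).card = 1 := by
  have h1 := Finset.card_union_add_card_inter a b
  have h2 := Finset.card_sdiff_add_card_inter a b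
  omega

lemma sdiff_eq_singleton {d : ℕ} {a b : Finset ℕ} (ha : a.card = d) (hb : b.card = d)
    (hu : (a ∪ b).card = d + 1) : a \ b = {sInf ↑(a \ b)} := by
  obtain ⟨x, hx⟩ := Finset.card_eq_one.mp (sdiff_card_one ha hb hu)
  rw [hx]; simp

lemma sInf_sdiff_mem {d : ℕ} {a b : Finset ℕ} (ha : a.card = d) (hb : b.card = d)
    (hu : (a ∪ b).card = d + 1) : sInf ↑(a \ b) ∈ a \ b := by
  rw [sdiff_eq_singleton ha hb hu] at *; simp

lemma trans_decomp {d : ℕ} {a b : Finset ℕ} (ha : a.card = d) (hb : b.card = d)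
    (hu : (a ∪ b).card = d + 1) :
    b = insert (sInf ↑(b \ a)) (a.erase (sInf ↑(a \ b))) := by
  have hx := sdiff_eq_singleton ha hb hu
  have hy := sdiff_eq_singleton hb ha (by rwa [Finset.union_comm])
  have herase : a.erase (sInf ↑(a \ b)) = a ∩ b := by
    rw [← Finset.sdiff_singleton_eq_erase, ← hx, Finset.sdiff_sdiff_self_left]
  rw [herase, Finset.insert_eq, ← hy, Finset.inter_comm, Finset.sdiff_union_inter]

/-- Index of the dropped vertex within the sorted current letter. -/
noncomputable def encIdx (a b : Finset ℕ) : ℕ := (a.sort (· ≤ ·)).idxOf (sInf ↑(a \ b))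

/-- The added vertex. -/
noncomputable def encY (a b : Finset ℕ) : ℕ := sInf ↑(b \ a)

lemma step_eq {d : ℕ} {a b b' : Finset ℕ} (ha : a.card = d) (hb : b.card = d)
    (hb' : b'.card = d) (hu : (a ∪ b).card = d + 1) (hu' : (a ∪ b').card = d + 1)
    (hidx : encIdx a b = encIdx a b') (hy : encY a b = encY a b') : b = b' := by
  have hx : sInf (↑(a \ b) : Set ℕ) = sInf (↑(a \ b') : Set ℕ) := by
    have hm : sInf ↑(a \ b) ∈ a.sort (· ≤ ·) :=
      (Finset.mem_sort _).mpr (Finset.sdiff_subset (sInf_sdiff_mem ha hb hu))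
    have hm' : sInf ↑(a \ b') ∈ a.sort (· ≤ ·) :=
      (Finset.mem_sort _).mpr (Finset.sdiff_subset (sInf_sdiff_mem ha hb' hu'))
    exact (List.idxOf_inj hm (y := _)).mp hidx
  rw [trans_decomp ha hb hu, trans_decomp ha hb' hu']
  rw [hx]; congr 1

/-- Canonical closed words: support is `range s` and first letter is `range d`. -/
def Canon (d k s : ℕ) : Type :=
  {w : ClosedWord d k s // Finset.univ.biUnion w.1 = Finset.range s ∧ w.1 0 = Finset.range d}

noncomputable def enc {d k s : ℕ} (w : Canon d k s) (i : Fin k) : Fin d × Fin s :=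
  (⟨encIdx (w.1.1 i.castSucc) (w.1.1 i.succ), by
      have hm : sInf ↑(w.1.1 i.castSucc \ w.1.1 i.succ) ∈ (w.1.1 i.castSucc).sort (· ≤ ·) :=
        (Finset.mem_sort _).mpr (Finset.sdiff_subset
          (sInf_sdiff_mem (w.1.2.1 _) (w.1.2.1 _) (w.1.2.2.1 i)))
      have := List.idxOf_lt_length_iff.mpr hm
      rwa [Finset.length_sort, w.1.2.1] at this⟩,
   ⟨encY (w.1.1 i.castSucc) (w.1.1 i.succ), by
      have hm := sInf_sdiff_mem (w.1.2.1 i.succ) (w.1.2.1 i.castSucc)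
        (by rw [Finset.union_comm]; exact w.1.2.2.1 i)
      have hb : w.1.1 i.succ ⊆ Finset.range s := by
        have h2 := Finset.subset_biUnion_of_mem w.1.1 (Finset.mem_univ i.succ)
        rwa [w.2.1] at h2
      exact Finset.mem_range.mp (hb (Finset.sdiff_subset hm))⟩)

lemma enc_injective (d k s : ℕ) : Function.Injective (@enc d k s) := by
  intro w w' h
  have key : ∀ i : Fin (k + 1), w.1.1 i = w'.1.1 i := by
    intro i
    induction i using Fin.induction with
    | zero => rw [w.2.2, w'.2.2]
    | succ i ih =>
      have hE := congrFun h i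
      have hidx : encIdx (w.1.1 i.castSucc) (w.1.1 i.succ)
          = encIdx (w'.1.1 i.castSucc) (w'.1.1 i.succ) :=
        congrArg (fun p => (p.1 : ℕ)) hE
      have hy : encY (w.1.1 i.castSucc) (w.1.1 i.succ)
          = encY (w'.1.1 i.castSucc) (w'.1.1 i.succ) :=
        congrArg (fun p => (p.2 : ℕ)) hE
      rw [← ih] at hidx hy
      exact step_eq (w.1.2.1 _) (w.1.2.1 _) (w'.1.2.1 _) (w.1.2.2.1 i)
        (by rw [ih]; exact w'.1.2.2.1 i) hidx hy
  exact Subtype.ext (Subtype.ext (funext key))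

instance (d k s : ℕ) : Finite (Canon d k s) :=
  Finite.of_injective _ (enc_injective d k s)

lemma card_canon_le (d k s : ℕ) : Nat.card (Canon d k s) ≤ (d * s) ^ k := by
  have := Nat.card_le_card_of_injective _ (enc_injective d k s)
  simpa [Nat.card_eq_fintype_card, mul_comm] using this


variable {d sd : ℕ} {A T : Finset ℕ}

noncomputable def canonPi (d sd : ℕ) (A T : Finset ℕ) (hA : A.card = d) (hT : T.card = sd) :
    ℕ → ℕ := fun x =>
  if hx : x ∈ A then ((A.orderIsoOfFin hA).symm ⟨x, hx⟩ : Fin d).val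
  else if hx' : x ∈ T then d + ((T.orderIsoOfFin hT).symm ⟨x, hx'⟩ : Fin sd).val
  else x

variable (hA : A.card = d) (hT : T.card = sd)

lemma canonPi_strictMonoOn : StrictMonoOn (canonPi d sd A T hA hT) ↑A := by
  intro x hx y hy hxy
  have hx' : x ∈ A := hx
  have hy' : y ∈ A := hy
  simp only [canonPi, dif_pos hx', dif_pos hy']
  exact (A.orderIsoOfFin hA).symm.strictMono (Subtype.mk_lt_mk.mpr hxy)

lemma canonPi_image_A : A.image (canonPi d sd A T hA hT) = Finset.range d := by
  apply Finset.eq_of_subset_of_card_le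
  · intro y hy
    obtain ⟨x, hx, rfl⟩ := Finset.mem_image.mp hy
    simp only [canonPi, dif_pos hx]
    exact Finset.mem_range.mpr (Fin.isLt _)
  · rw [Finset.card_range,
      Finset.card_image_of_injOn (canonPi_strictMonoOn hA hT).injOn, hA]

variable (hdisj : ∀ x ∈ T, x ∉ A)

include hdisj in
lemma canonPi_image_T : T.image (canonPi d sd A T hA hT) =
    Finset.range (d + sd) \ Finset.range d := by
  have hinj : Set.InjOn (canonPi d sd A T hA hT) ↑T := by
    intro x hx y hy hpi
    have hx' : x ∈ T := hx
    have hy' : y ∈ T := hy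
    simp only [canonPi, dif_neg (hdisj x hx'), dif_neg (hdisj y hy'),
      dif_pos hx', dif_pos hy'] at hpi
    exact congrArg Subtype.val
      ((T.orderIsoOfFin hT).symm.injective (Fin.val_injective (Nat.add_left_cancel hpi)))
  apply Finset.eq_of_subset_of_card_le
  · intro y hy
    obtain ⟨x, hx, rfl⟩ := Finset.mem_image.mp hy
    simp only [canonPi, dif_neg (hdisj x hx), dif_pos hx]
    simp only [Finset.mem_sdiff, Finset.mem_range]
    have := ((T.orderIsoOfFin hT).symm ⟨x, hx⟩).isLt
    omega
  · rw [Finset.card_sdiff_of_subset (Finset.range_subset_range.mpr (Nat.le_add_right d sd)),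
      Finset.card_range, Finset.card_range, Finset.card_image_of_injOn hinj, hT]
    omega

include hdisj in
lemma canonPi_injOn_union : Set.InjOn (canonPi d sd A T hA hT) ↑(A ∪ T) := by
  intro x hx y hy hpi
  have hx' : x ∈ A ∪ T := hx
  have hy' : y ∈ A ∪ T := hy
  have hltA : ∀ z (hz : z ∈ A), canonPi d sd A T hA hT z < d := by
    intro z hz; simp only [canonPi, dif_pos hz]; exact Fin.isLt _
  have hgeT : ∀ z (hz : z ∈ T), d ≤ canonPi d sd A T hA hT z := by
    intro z hz; simp only [canonPi, dif_neg (hdisj z hz), dif_pos hz]; omega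
  rcases Finset.mem_union.mp hx' with hxa | hxt <;>
    rcases Finset.mem_union.mp hy' with hya | hyt
  · exact (canonPi_strictMonoOn hA hT).injOn hxa hya hpi
  · exact absurd (hpi ▸ hltA x hxa) (not_lt.mpr (hgeT y hyt))
  · exact absurd (hpi ▸ hgeT x hxt) (not_le.mpr (hltA y hya))
  · -- both in T
    simp only [canonPi, dif_neg (hdisj x hxt), dif_neg (hdisj y hyt),
      dif_pos hxt, dif_pos hyt] at hpi
    exact congrArg Subtype.val
      ((T.orderIsoOfFin hT).symm.injective (Fin.val_injective (Nat.add_left_cancel hpi)))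


lemma exists_canon (d k s : ℕ) (hds : d ≤ s) (w : ClosedWord d k s) :
    ∃ c : Canon d k s, WordEquiv d k s w c.1 := by
  classical
  obtain ⟨σ, hc, hu, hcl, hsup, hN⟩ := w
  have hA : σ 0 ⊆ Finset.univ.biUnion σ := Finset.subset_biUnion_of_mem σ (Finset.mem_univ 0)
  have hTcard : ((Finset.univ.biUnion σ) \ σ 0).card = s - d := by
    rw [Finset.card_sdiff_of_subset hA, hsup, hc 0]
  set T := (Finset.univ.biUnion σ) \ σ 0 with hTdef
  set π := canonPi d (s - d) (σ 0) T (hc 0) hTcard with hπdef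
  have hdisj : ∀ x ∈ T, x ∉ σ 0 := fun x hx => (Finset.mem_sdiff.mp hx).2
  have hST : σ 0 ∪ T = Finset.univ.biUnion σ := Finset.union_sdiff_of_subset hA
  have hinj : Set.InjOn π ↑(Finset.univ.biUnion σ) := by
    have := canonPi_injOn_union (hc 0) hTcard hdisj
    rwa [hST] at this
  have himS : (Finset.univ.biUnion σ).image π = Finset.range s := by
    rw [← hST, Finset.image_union, canonPi_image_A, canonPi_image_T _ _ hdisj,
      Nat.add_sub_cancel' hds, Finset.union_sdiff_of_subset (Finset.range_subset_range.mpr hds)]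
  have hsub : ∀ i, σ i ⊆ Finset.univ.biUnion σ :=
    fun i => Finset.subset_biUnion_of_mem σ (Finset.mem_univ i)
  have hsubU : ∀ i : Fin k, σ i.castSucc ∪ σ i.succ ⊆ Finset.univ.biUnion σ :=
    fun i => Finset.union_subset (hsub _) (hsub _)
  have hinji : ∀ i, Set.InjOn π ↑(σ i) :=
    fun i => hinj.mono (Finset.coe_subset.mpr (hsub i))
  refine ⟨⟨⟨fun i => (σ i).image π, ?_, ?_, ?_, ?_, ?_⟩, ?_, ?_⟩, π, ?_, fun i => rfl, ?_⟩
  · intro i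
    rw [Finset.card_image_of_injOn (hinji i), hc i]
  · intro i
    rw [← Finset.image_union,
      Finset.card_image_of_injOn (hinj.mono (Finset.coe_subset.mpr (hsubU i))), hu i]
  · exact congrArg (Finset.image π) hcl
  · rw [← Finset.biUnion_image, himS, Finset.card_range]
  · intro τ
    by_cases hτ : ∃ j : Fin k, (σ j.castSucc).image π ∪ (σ j.succ).image π = τ
    · obtain ⟨j, hj⟩ := hτ
      have hfeq : (Finset.univ.filter
            (fun i : Fin k => (σ i.castSucc).image π ∪ (σ i.succ).image π = τ))
          = Finset.univ.filter
            (fun i : Fin k => σ i.castSucc ∪ σ i.succ = σ j.castSucc ∪ σ j.succ) := by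
        ext i
        simp only [Finset.mem_filter, Finset.mem_univ, true_and]
        rw [← hj, ← Finset.image_union, ← Finset.image_union]
        constructor
        · intro hi
          apply Finset.coe_inj.mp
          apply (hinj.image_eq_image_iff (Finset.coe_subset.mpr (hsubU i))
            (Finset.coe_subset.mpr (hsubU j))).mp
          rw [← Finset.coe_image, ← Finset.coe_image, hi]
        · intro hi; rw [hi]
      rw [hfeq]
      exact hN _
    · have hempty : (Finset.univ.filter
          (fun i : Fin k => (σ i.castSucc).image π ∪ (σ i.succ).image π = τ)) = ∅ := by
        apply Finset.filter_eq_empty_iff.mpr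
        intro i _
        exact fun hcon => hτ ⟨i, hcon⟩
      rw [hempty, Finset.card_empty]
      omega
  · rw [← Finset.biUnion_image, himS]
  · exact canonPi_image_A (hc 0) hTcard
  · have hbij := hinj.bijOn_image
    have : π '' ↑(Finset.univ.biUnion σ)
        = ↑(Finset.univ.biUnion fun i => (σ i).image π) := by
      rw [← Finset.biUnion_image, Finset.coe_image]
    rwa [this] at hbij
  · exact canonPi_strictMonoOn (hc 0) hTcard

end Stmt2Aux

theorem stmt2 (d k s : ℕ) (hd : 2 ≤ d) (hk : 2 ≤ k) (hs1 : d + 1 ≤ s)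
    (hs2 : s ≤ k / 2 + d) :
    Finite (Quot (WordEquiv d k s)) ∧
      Nat.card (Quot (WordEquiv d k s)) ≤ (d * s) ^ k := by
  have hds : d ≤ s := by omega
  have hsurj : Function.Surjective
      (fun c : Stmt2Aux.Canon d k s => Quot.mk (WordEquiv d k s) c.1) := by
    intro q
    induction q using Quot.ind with
    | _ w =>
      obtain ⟨c, hc⟩ := Stmt2Aux.exists_canon d k s hds w
      exact ⟨c, (Quot.sound hc).symm⟩
  refine ⟨Finite.of_surjective _ hsurj, ?_⟩
  exact le_trans (Nat.card_le_card_of_surjective _ hsurj) (Stmt2Aux.card_canon_le d k s)
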